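/- arXiv:2505.09596 — 2 statements merged into one kernel-verified Lean document; each statement's English description precedes it below -/
import Mathlib

section
/- For n ≥ 4, there exists an orthogonal Latin hypercube of n runs with more than one factor (i.e., an n × k matrix with k ≥ 2 whose columns are permutations of {1,...,n}, such that any two distinct centered columns have zero inner product) if and only if n is not of the form 4m + 2 for an integer m. -/
set_option maxHeartbeats 1000000

def olhF (n : ℕ) (p : ℕ) : ℕ :=
  if n = 4 then (if p = 0 then 2 else if p = 1 then 0 else if p = 2 then 3 else 1)
  else if n = 5 then (if p = 0 then 3 else if p = 1 then 0 else if p = 2 then 2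
    else if p = 3 then 4 else 1)
  else if n = 7 then (if p = 0 then 4 else if p = 1 then 2 else if p = 2 then 0
    else if p = 3 then 6 else if p = 4 then 5 else if p = 5 then 1 else 3)
  else if _h : n < 8 then p
  else if p = 0 then n - 2 else if p = 1 then 0 else if p = n - 2 then n - 1
  else if p = n - 1 then 1 else olhF (n - 4) (p - 2) + 2
termination_by n
decreasing_by omega

lemma olhF_big (n p : ℕ) (h : 8 ≤ n) :
    olhF n p = if p = 0 then n - 2 else if p = 1 then 0 else if p = n - 2 then n - 1
      else if p = n - 1 then 1 else olhF (n - 4) (p - 2) + 2 := by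
  rw [olhF]
  have h4 : n ≠ 4 := by omega
  have h5 : n ≠ 5 := by omega
  have h7 : n ≠ 7 := by omega
  have h8 : ¬ n < 8 := by omega
  rw [if_neg h4, if_neg h5, if_neg h7, dif_neg h8]

example : olhF 4 0 = 2 := by rw [olhF]; norm_num

lemma olhF_4 (p : ℕ) : olhF 4 p =
    (if p = 0 then 2 else if p = 1 then 0 else if p = 2 then 3 else 1) := by
  rw [olhF]; norm_num

lemma olhF_5 (p : ℕ) : olhF 5 p =
    (if p = 0 then 3 else if p = 1 then 0 else if p = 2 then 2 else if p = 3 then 4 else 1) := by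
  rw [olhF]; norm_num

lemma olhF_7 (p : ℕ) : olhF 7 p =
    (if p = 0 then 4 else if p = 1 then 2 else if p = 2 then 0
      else if p = 3 then 6 else if p = 4 then 5 else if p = 5 then 1 else 3) := by
  rw [olhF]; norm_num

lemma olhF_lt (n : ℕ) (hn : 4 ≤ n) (hm : n % 4 ≠ 2) : ∀ p < n, olhF n p < n := by
  induction n using Nat.strong_induction_on with
  | _ n ih =>
    intro p hp
    rcases (by omega : n = 4 ∨ n = 5 ∨ n = 7 ∨ 8 ≤ n) with h | h | h | h
    · subst h; rw [olhF_4]; split_ifs <;> omega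
    · subst h; rw [olhF_5]; split_ifs <;> omega
    · subst h; rw [olhF_7]; split_ifs <;> omega
    · rw [olhF_big n p h]
      have := ih (n - 4) (by omega) (by omega) (by omega) (p - 2)
      split_ifs <;> omega

lemma olhF_inj (n : ℕ) (hn : 4 ≤ n) (hm : n % 4 ≠ 2) :
    ∀ p < n, ∀ q < n, olhF n p = olhF n q → p = q := by
  induction n using Nat.strong_induction_on with
  | _ n ih =>
    intro p hp q hq h
    rcases (by omega : n = 4 ∨ n = 5 ∨ n = 7 ∨ 8 ≤ n) with hc | hc | hc | hc
    · subst hc; rw [olhF_4, olhF_4] at h; split_ifs at h <;> omega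
    · subst hc; rw [olhF_5, olhF_5] at h; split_ifs at h <;> omega
    · subst hc; clear ih hn hm; rw [olhF_7, olhF_7] at h; split_ifs at h <;> omega
    · rw [olhF_big n p hc, olhF_big n q hc] at h
      have hlt := olhF_lt (n - 4) (by omega) (by omega)
      have h1 := hlt (p - 2)
      have h2 := hlt (q - 2)
      have h3 := ih (n - 4) (by omega) (by omega) (by omega) (p - 2)
      split_ifs at h <;>
        first
          | omega
          | (have := h3 (by omega) (q - 2) (by omega) (by omega); omega)


lemma olhF_sum (n : ℕ) (hn : 4 ≤ n) (hm : n % 4 ≠ 2) :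
    ∑ p ∈ Finset.range n,
      (((p : ℝ) + 1 - ((n : ℝ) + 1) / 2) * ((olhF n p : ℝ) + 1 - ((n : ℝ) + 1) / 2)) = 0 := by
  induction n using Nat.strong_induction_on with
  | _ n ih =>
    rcases (by omega : n = 4 ∨ n = 5 ∨ n = 7 ∨ 8 ≤ n) with hc | hc | hc | hc
    · subst hc; norm_num [Finset.sum_range_succ, olhF_4]
    · subst hc; norm_num [Finset.sum_range_succ, olhF_5]
    · subst hc; norm_num [Finset.sum_range_succ, olhF_7]
    · obtain ⟨m, rfl⟩ : ∃ m, n = m + 4 := ⟨n - 4, by omega⟩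
      have hm4 : 4 ≤ m := by omega
      have e0 : olhF (m+4) 0 = m+2 := by
        rw [olhF_big _ _ (by omega)]; split_ifs <;> first | contradiction | omega
      have e1 : olhF (m+4) 1 = 0 := by
        rw [olhF_big _ _ (by omega)]; split_ifs <;> first | contradiction | omega
      have e2 : olhF (m+4) (m+2) = m+3 := by
        rw [olhF_big _ _ (by omega)]; split_ifs <;> first | contradiction | omega
      have e3 : olhF (m+4) (m+3) = 1 := by
        rw [olhF_big _ _ (by omega)]; split_ifs <;> first | contradiction | omega
      have ein : ∀ p < m, olhF (m+4) (p+2) = olhF m p + 2 := by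
        intro p hp
        rw [olhF_big _ _ (by omega), Nat.add_sub_cancel, Nat.add_sub_cancel]
        split_ifs <;> first | contradiction | omega
      have key : ∀ (T : ℕ → ℝ), ∑ p ∈ Finset.range (m+4), T p
          = T 0 + T 1 + (∑ p ∈ Finset.range m, T (p+2)) + T (m+2) + T (m+3) := by
        intro T
        rw [show m+4 = (m+1+1)+1+1 from by ring, Finset.sum_range_succ, Finset.sum_range_succ,
          Finset.sum_range_succ', Finset.sum_range_succ']
        ring_nf
      rw [key]
      have hsum : (∑ p ∈ Finset.range m, (((p+2 : ℕ) : ℝ) + 1 - (((m+4 : ℕ) : ℝ) + 1) / 2) *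
          ((olhF (m+4) (p+2) : ℝ) + 1 - (((m+4 : ℕ) : ℝ) + 1) / 2)) = 0 := by
        rw [Finset.sum_congr rfl (fun p hp => ?_), ih m (by omega) hm4 (by omega)]
        rw [ein p (Finset.mem_range.mp hp)]
        push_cast
        ring
      rw [hsum, e0, e1, e2, e3]
      push_cast
      ring


/-- An orthogonal Latin hypercube of `n` runs with more than one factor exists
iff `n` is not of the form `4m+2`. Columns are permutations of `{1,...,n}`,
encoded as `Equiv.Perm (Fin n)` with values shifted by one. -/
theorem olh_exists_iff (n : ℕ) (hn : 4 ≤ n) :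
    (∃ k : ℕ, 2 ≤ k ∧ ∃ c : Fin k → Equiv.Perm (Fin n),
      ∀ a b : Fin k, a ≠ b →
        ∑ i : Fin n,
          (((c a i : ℕ) : ℝ) + 1 - ((n : ℝ) + 1) / 2) *
          (((c b i : ℕ) : ℝ) + 1 - ((n : ℝ) + 1) / 2) = 0)
    ↔ ¬ ∃ m : ℕ, n = 4 * m + 2 := by
  constructor
  · rintro ⟨k, hk, c, hc⟩ ⟨m, rfl⟩
    set σ := c ⟨0, by omega⟩ with hσdef
    set τ := c ⟨1, by omega⟩ with hτdef
    have hab : (⟨0, by omega⟩ : Fin k) ≠ ⟨1, by omega⟩ := by simp [Fin.ext_iff]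
    have h := hc _ _ hab
    set Nz : ℤ := 4 * (m : ℤ) + 2 with hNz
    -- sum of a permutation's values
    have hsum : ∀ e : Equiv.Perm (Fin (4*m+2)),
        2 * (∑ i : Fin (4*m+2), ((e i : ℕ) : ℤ)) = Nz * (Nz - 1) := by
      intro e
      have h1 : ∑ i : Fin (4*m+2), ((e i : ℕ) : ℤ) = ∑ i : Fin (4*m+2), ((i : ℕ) : ℤ) :=
        Equiv.sum_comp e (fun j : Fin (4*m+2) => ((j : ℕ) : ℤ))
      have h2 : ∑ i : Fin (4*m+2), ((i : ℕ) : ℤ) = ∑ p ∈ Finset.range (4*m+2), ((p : ℕ) : ℤ) :=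
        Fin.sum_univ_eq_sum_range (fun p => ((p : ℕ) : ℤ)) (4*m+2)
      have h3 : (∑ p ∈ Finset.range (4*m+2), p) * 2 = (4*m+2) * (4*m+2-1) :=
        Finset.sum_range_id_mul_two (4*m+2)
      rw [h1, h2, hNz]
      have h4 : ((∑ p ∈ Finset.range (4*m+2), p : ℕ) : ℤ) * 2
          = (((4*m+2) * (4*m+2-1) : ℕ) : ℤ) := by exact_mod_cast congrArg (Nat.cast (R := ℤ)) h3
      push_cast at h4
      linear_combination h4
    set S1 : ℤ := ∑ i : Fin (4*m+2), ((σ i : ℕ) : ℤ) with hS1def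
    set S2 : ℤ := ∑ i : Fin (4*m+2), ((τ i : ℕ) : ℤ) with hS2def
    set P : ℤ := ∑ i : Fin (4*m+2), ((σ i : ℕ) : ℤ) * ((τ i : ℕ) : ℤ) with hPdef
    have hZ : (∑ i : Fin (4*m+2),
        (2 * ((σ i : ℕ) : ℤ) + 1 - Nz) * (2 * ((τ i : ℕ) : ℤ) + 1 - Nz)) = 0 := by
      have hcast : ((∑ i : Fin (4*m+2),
          (2 * ((σ i : ℕ) : ℤ) + 1 - Nz) * (2 * ((τ i : ℕ) : ℤ) + 1 - Nz) : ℤ) : ℝ)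
          = 4 * ∑ i : Fin (4*m+2),
            (((σ i : ℕ) : ℝ) + 1 - (((4*m+2 : ℕ) : ℝ) + 1) / 2) *
            (((τ i : ℕ) : ℝ) + 1 - (((4*m+2 : ℕ) : ℝ) + 1) / 2) := by
        rw [Int.cast_sum, Finset.mul_sum]
        refine Finset.sum_congr rfl (fun i _ => ?_)
        rw [hNz]
        push_cast
        ring
      rw [h] at hcast
      norm_num at hcast
      exact_mod_cast hcast
    have expand : (∑ i : Fin (4*m+2),
        (2 * ((σ i : ℕ) : ℤ) + 1 - Nz) * (2 * ((τ i : ℕ) : ℤ) + 1 - Nz))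
        = 4 * P + 2 * (1 - Nz) * S1 + 2 * (1 - Nz) * S2 + (4*(m:ℤ)+2) * (1 - Nz)^2 := by
      rw [hPdef, hS1def, hS2def]
      rw [Finset.sum_congr rfl (fun i _ => show
        (2 * ((σ i : ℕ) : ℤ) + 1 - Nz) * (2 * ((τ i : ℕ) : ℤ) + 1 - Nz)
        = 4 * (((σ i : ℕ) : ℤ) * ((τ i : ℕ) : ℤ)) + (2 * (1 - Nz) * ((σ i : ℕ) : ℤ)
          + (2 * (1 - Nz) * ((τ i : ℕ) : ℤ) + (1 - Nz)^2)) from by ring)]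
      rw [Finset.sum_add_distrib, Finset.sum_add_distrib, Finset.sum_add_distrib,
        ← Finset.mul_sum, ← Finset.mul_sum, ← Finset.mul_sum,
        Finset.sum_const, Finset.card_univ, Fintype.card_fin]
      push_cast
      ring
    rw [expand] at hZ
    have hs1 := hsum σ
    have hs2 := hsum τ
    rw [← hS1def] at hs1
    rw [← hS2def] at hs2
    have key2 : (4:ℤ) * P = 64*(m:ℤ)^3 + 64*(m:ℤ)^2 + 20*(m:ℤ) + 2 := by
      rw [hNz] at hZ hs1 hs2
      linear_combination hZ + (4*(m:ℤ)+1) * hs1 + (4*(m:ℤ)+1) * hs2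
    obtain ⟨w, hw⟩ : ∃ w : ℤ, (m:ℤ)^3 = w := ⟨_, rfl⟩
    obtain ⟨v, hv⟩ : ∃ v : ℤ, (m:ℤ)^2 = v := ⟨_, rfl⟩
    rw [hw, hv] at key2
    omega
  · intro hne
    have h4 : n % 4 ≠ 2 := fun h => hne ⟨n / 4, by omega⟩
    set F : Fin n → Fin n := fun i => ⟨olhF n i, olhF_lt n hn h4 i i.isLt⟩ with hF
    have hinj : Function.Injective F := by
      intro a b hab
      exact Fin.ext (olhF_inj n hn h4 a a.isLt b b.isLt (by
        have := congrArg Fin.val hab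
        simpa [hF] using this))
    let e : Equiv.Perm (Fin n) := Equiv.ofBijective F (Finite.injective_iff_bijective.mp hinj)
    have he : ∀ i : Fin n, ((e i : ℕ)) = olhF n i := fun i => rfl
    have key : ∑ i : Fin n,
        (((i : ℕ) : ℝ) + 1 - ((n : ℝ) + 1) / 2) * (((e i : ℕ) : ℝ) + 1 - ((n : ℝ) + 1) / 2)
        = 0 := by
      simp only [he]
      rw [Fin.sum_univ_eq_sum_range
        (fun p => (((p : ℕ) : ℝ) + 1 - ((n : ℝ) + 1) / 2) * ((olhF n p : ℝ) + 1 - ((n : ℝ) + 1) / 2)) n]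
      exact olhF_sum n hn h4
    refine ⟨2, le_refl 2, ![Equiv.refl _, e], ?_⟩
    intro a b hab
    fin_cases a <;> fin_cases b <;> simp_all [Matrix.cons_val_zero, Matrix.cons_val_one]
    rw [← key]
    exact Finset.sum_congr rfl (fun i _ => by ring)
end

section
/- If n ≡ 2 (mod 4), then for any two permutations u, v of {1, ..., n}, the centered inner product Σ_{i=1}^n (u_i - (n+1)/2)(v_i - (n+1)/2) is nonzero; hence no orthogonal Latin hypercube with n runs and 2 or more factors exists. -/
/-- If `n ≡ 2 (mod 4)`, then any two permutations `u, v` of `{1,...,n}`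
(encoded as `Equiv.Perm (Fin n)` with values shifted by one) have nonzero
centered inner product, so no orthogonal Latin hypercube with `n` runs and
two or more factors exists. -/
theorem no_olh_of_mod_four_eq_two (n : ℕ) (hn : n % 4 = 2)
    (u v : Equiv.Perm (Fin n)) :
    ∑ i : Fin n,
      (((u i : ℕ) : ℝ) + 1 - ((n : ℝ) + 1) / 2) *
      (((v i : ℕ) : ℝ) + 1 - ((n : ℝ) + 1) / 2) ≠ 0 := by
  obtain ⟨q, hq⟩ : ∃ q, n = 4 * q + 2 := ⟨n / 4, by omega⟩
  set a : Fin n → ℤ := fun i => 2 * ((u i : ℕ) : ℤ) + 2 - ((n : ℤ) + 1) with ha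
  set b : Fin n → ℤ := fun i => 2 * ((v i : ℕ) : ℤ) + 2 - ((n : ℤ) + 1) with hb
  set s : ℤ := ∑ i, a i * b i with hs
  -- sums of centered (doubled) columns vanish
  have hsum : ∀ w : Equiv.Perm (Fin n),
      ∑ i : Fin n, (2 * ((w i : ℕ) : ℤ) + 2 - ((n : ℤ) + 1)) = 0 := by
    intro w
    have h1 : ∑ i : Fin n, ((w i : ℕ) : ℤ) = ∑ i : Fin n, ((i : ℕ) : ℤ) :=
      Equiv.sum_comp w (fun i => ((i : ℕ) : ℤ))
    have h2 : (∑ i ∈ Finset.range n, i) * 2 = n * (n - 1) :=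
      Finset.sum_range_id_mul_two n
    have h2' : (∑ i : Fin n, ((i : ℕ) : ℤ)) * 2 = (n : ℤ) * ((n : ℤ) - 1) := by
      rw [Fin.sum_univ_eq_sum_range]
      have : ((∑ i ∈ Finset.range n, i : ℕ) : ℤ) * 2 = ((n * (n - 1) : ℕ) : ℤ) := by
        exact_mod_cast congrArg (fun x : ℕ => (x : ℤ)) h2
      rw [Nat.cast_mul, Nat.cast_sub (by omega : 1 ≤ n)] at this
      push_cast at this ⊢
      linarith
    rw [Finset.sum_sub_distrib, Finset.sum_add_distrib, ← Finset.mul_sum, h1]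
    simp only [Finset.sum_const, Finset.card_univ, Fintype.card_fin, nsmul_eq_mul]
    nlinarith [h2']
  have hA := hsum u
  have hB := hsum v
  -- s ≡ -n [mod 4]
  have hdvd : (4 : ℤ) ∣ s + (n : ℤ) := by
    have hexp : ∑ i : Fin n, (a i - 1) * (b i - 1) = s + (n : ℤ) := by
      have : ∑ i : Fin n, (a i - 1) * (b i - 1)
          = ∑ i : Fin n, (a i * b i - a i - b i + 1) :=
        Finset.sum_congr rfl (fun i _ => by ring)
      rw [this, Finset.sum_add_distrib, Finset.sum_sub_distrib, Finset.sum_sub_distrib]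
      simp only [Finset.sum_const, Finset.card_univ, Fintype.card_fin, nsmul_eq_mul,
        mul_one]
      rw [← hs, hA, hB]
      ring
    rw [← hexp]
    apply Finset.dvd_sum
    intro i _
    refine ⟨(((u i : ℕ) : ℤ) - 2 * q - 1) * (((v i : ℕ) : ℤ) - 2 * q - 1), ?_⟩
    have hcn : (n : ℤ) = 4 * q + 2 := by exact_mod_cast congrArg (fun x : ℕ => (x : ℤ)) hq
    simp only [ha, hb]
    rw [hcn]
    ring
  have hsne : s ≠ 0 := by
    intro h0
    rw [h0, zero_add] at hdvd
    have : (4 : ℕ) ∣ n := by exact_mod_cast hdvd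
    omega
  -- relate real sum to s
  intro h
  have hcast : (s : ℝ) = 4 * ∑ i : Fin n,
      (((u i : ℕ) : ℝ) + 1 - ((n : ℝ) + 1) / 2) *
      (((v i : ℕ) : ℝ) + 1 - ((n : ℝ) + 1) / 2) := by
    rw [hs, Finset.mul_sum]
    rw [Int.cast_sum]
    apply Finset.sum_congr rfl
    intro i _
    simp only [ha, hb]
    push_cast
    ring
  rw [h, mul_zero] at hcast
  exact hsne (by exact_mod_cast hcast)
end
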